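/- arXiv:2505.02083 — 5 statements merged into one kernel-verified Lean document; each statement's English description precedes it below -/
import Mathlib

section
/- Let p ≥ 0 and let α₁,…,α_k and β₁,…,β_k be non-increasing sequences of nonnegative integers bounded above by p, with α₁ + ⋯ + α_j ≤ β₁ + ⋯ + β_j for all j = 1,…,k. If pα₁ + Σ_{i=1}^{k−1} α_i α_{i+1} = pβ₁ + Σ_{i=1}^{k−1} β_i β_{i+1}, then α_i = β_i for all i = 1,…,k. -/
private lemma icc_range_aux (f : ℕ → ℤ) :
    ∀ m, ∑ i ∈ Finset.Icc 1 m, f i = ∑ i ∈ Finset.range m, f (i + 1) := by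
  intro m
  induction m with
  | zero => simp
  | succ m ih =>
    rw [Finset.sum_Icc_succ_top (by omega : 1 ≤ m + 1), ih, Finset.sum_range_succ]

private lemma abel_aux (c E : ℕ → ℤ) (h0 : E 0 = 0) :
    ∀ n, ∑ i ∈ Finset.range n, c i * (E (i + 1) - E i)
      = c n * E n + ∑ i ∈ Finset.range n, (c i - c (i + 1)) * E (i + 1) := by
  intro n
  induction n with
  | zero => simp [h0]
  | succ n ih =>
    rw [Finset.sum_range_succ, Finset.sum_range_succ, ih]
    ring

/-- Lemma 2.2 (equality case of the products inequality): if the weighted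
products sums are equal, then αᵢ = βᵢ for all i. -/
theorem stmt_5 (k : ℕ) (p : ℤ) (hp : 0 ≤ p) (α β : ℕ → ℤ)
    (hαmono : ∀ i, 1 ≤ i → i < k → α (i + 1) ≤ α i)
    (hβmono : ∀ i, 1 ≤ i → i < k → β (i + 1) ≤ β i)
    (hαnn : ∀ i, 1 ≤ i → i ≤ k → 0 ≤ α i)
    (hβnn : ∀ i, 1 ≤ i → i ≤ k → 0 ≤ β i)
    (hαub : ∀ i, 1 ≤ i → i ≤ k → α i ≤ p)
    (hβub : ∀ i, 1 ≤ i → i ≤ k → β i ≤ p)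
    (hmaj : ∀ j, 1 ≤ j → j ≤ k →
      ∑ i ∈ Finset.Icc 1 j, α i ≤ ∑ i ∈ Finset.Icc 1 j, β i)
    (heq : p * α 1 + ∑ i ∈ Finset.Icc 1 (k - 1), α i * α (i + 1) =
      p * β 1 + ∑ i ∈ Finset.Icc 1 (k - 1), β i * β (i + 1)) :
    ∀ i, 1 ≤ i → i ≤ k → α i = β i := by
  rcases Nat.eq_zero_or_pos k with hk0 | hk0
  · intro i h1 h2; omega
  obtain ⟨m, rfl⟩ : ∃ m, k = m + 1 := ⟨k - 1, by omega⟩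
  simp only [Nat.add_sub_cancel] at heq
  set a : ℕ → ℤ := fun i => if i = 0 then p else if i ≤ m + 1 then α i else 0 with hadef
  set b : ℕ → ℤ := fun i => if i = 0 then p else if i ≤ m + 1 then β i else 0 with hbdef
  set d : ℕ → ℤ := fun i => b i - a i with hddef
  set D : ℕ → ℤ := fun j => ∑ i ∈ Finset.range (j + 1), d i with hDdef
  have ha0 : a 0 = p := by simp [hadef]
  have hb0 : b 0 = p := by simp [hbdef]
  have haval : ∀ i, 1 ≤ i → i ≤ m + 1 → a i = α i := by
    intro i h1 h2; simp only [hadef]; rw [if_neg (by omega), if_pos h2]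
  have hbval : ∀ i, 1 ≤ i → i ≤ m + 1 → b i = β i := by
    intro i h1 h2; simp only [hbdef]; rw [if_neg (by omega), if_pos h2]
  have habig : ∀ i, m + 1 < i → a i = 0 := by
    intro i h; simp only [hadef]; rw [if_neg (by omega), if_neg (by omega)]
  have hbbig : ∀ i, m + 1 < i → b i = 0 := by
    intro i h; simp only [hbdef]; rw [if_neg (by omega), if_neg (by omega)]
  have hann : ∀ i, 0 ≤ a i := by
    intro i
    rcases Nat.eq_zero_or_pos i with rfl | h1
    · rw [ha0]; exact hp
    by_cases h2 : i ≤ m + 1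
    · rw [haval i h1 h2]; exact hαnn i h1 h2
    · rw [habig i (by omega)]
  have hbnn : ∀ i, 0 ≤ b i := by
    intro i
    rcases Nat.eq_zero_or_pos i with rfl | h1
    · rw [hb0]; exact hp
    by_cases h2 : i ≤ m + 1
    · rw [hbval i h1 h2]; exact hβnn i h1 h2
    · rw [hbbig i (by omega)]
  have hamono : ∀ i, a (i + 1) ≤ a i := by
    intro i
    rcases Nat.eq_zero_or_pos i with rfl | h1
    · rw [ha0, haval 1 le_rfl (by omega)]; exact hαub 1 le_rfl (by omega)
    by_cases h2 : i + 1 ≤ m + 1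
    · rw [haval (i + 1) (by omega) h2, haval i h1 (by omega)]
      exact hαmono i h1 (by omega)
    · rw [habig (i + 1) (by omega)]
      exact hann i
  have hbmono : ∀ i, b (i + 1) ≤ b i := by
    intro i
    rcases Nat.eq_zero_or_pos i with rfl | h1
    · rw [hb0, hbval 1 le_rfl (by omega)]; exact hβub 1 le_rfl (by omega)
    by_cases h2 : i + 1 ≤ m + 1
    · rw [hbval (i + 1) (by omega) h2, hbval i h1 (by omega)]
      exact hβmono i h1 (by omega)
    · rw [hbbig (i + 1) (by omega)]
      exact hbnn i
  have hd0 : d 0 = 0 := by simp only [hddef]; rw [ha0, hb0]; ring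
  have hD0 : D 0 = 0 := by
    simp only [hDdef]; rw [Finset.sum_range_one, hd0]
  have hDstep : ∀ j, D (j + 1) = D j + d (j + 1) := by
    intro j
    simp only [hDdef]
    exact Finset.sum_range_succ d (j + 1)
  have hDIcc : ∀ j, j ≤ m + 1 →
      D j = (∑ i ∈ Finset.Icc 1 j, β i) - ∑ i ∈ Finset.Icc 1 j, α i := by
    intro j
    induction j with
    | zero => intro _; rw [hD0]; simp
    | succ j ihj =>
      intro hj
      rw [hDstep j, ihj (by omega),
        Finset.sum_Icc_succ_top (by omega : 1 ≤ j + 1) β,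
        Finset.sum_Icc_succ_top (by omega : 1 ≤ j + 1) α]
      have hdv : d (j + 1) = β (j + 1) - α (j + 1) := by
        simp only [hddef]
        rw [haval (j + 1) (by omega) hj, hbval (j + 1) (by omega) hj]
      rw [hdv]; ring
  have hDnn : ∀ j, j ≤ m + 1 → 0 ≤ D j := by
    intro j hj
    rcases Nat.eq_zero_or_pos j with rfl | h1
    · rw [hD0]
    · rw [hDIcc j hj]
      have := hmaj j h1 hj
      linarith
  -- the sums conversion
  have conv : ∀ (c γ : ℕ → ℤ), c 0 = p → (∀ i, 1 ≤ i → i ≤ m + 1 → c i = γ i) →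
      ∑ i ∈ Finset.range (m + 1), c i * c (i + 1)
        = p * γ 1 + ∑ i ∈ Finset.Icc 1 m, γ i * γ (i + 1) := by
    intro c γ hc0 hcγ
    rw [Finset.sum_range_succ', icc_range_aux (fun i => γ i * γ (i + 1)) m]
    have h1 : c 0 * c (0 + 1) = p * γ 1 := by
      rw [hc0, hcγ 1 le_rfl (by omega)]
    have h2 : ∑ i ∈ Finset.range m, c (i + 1) * c (i + 1 + 1)
        = ∑ i ∈ Finset.range m, γ (i + 1) * γ (i + 1 + 1) := by
      apply Finset.sum_congr rfl
      intro i hi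
      have hi' := Finset.mem_range.1 hi
      rw [hcγ (i + 1) (by omega) (by omega), hcγ (i + 1 + 1) (by omega) (by omega)]
    rw [h1, h2]
    ring
  have hG0 : ∑ i ∈ Finset.range (m + 1), (b i * b (i + 1) - a i * a (i + 1)) = 0 := by
    rw [Finset.sum_sub_distrib, conv a α ha0 haval, conv b β hb0 hbval]
    linarith
  -- decomposition
  have e1 : ∑ i ∈ Finset.range (m + 1), (b i * b (i + 1) - a i * a (i + 1))
      = (∑ i ∈ Finset.range (m + 1), a i * (D (i + 1) - D i))
        + ∑ i ∈ Finset.range (m + 1), b (i + 1) * d i := by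
    rw [← Finset.sum_add_distrib]
    apply Finset.sum_congr rfl
    intro i _
    rw [hDstep i]
    simp only [hddef]
    ring
  have e2 := abel_aux a D hD0 (m + 1)
  have e3 : ∑ i ∈ Finset.range (m + 1), b (i + 1) * d i
      = ∑ i ∈ Finset.range m, (b (i + 2) - b (i + 3)) * D (i + 1) := by
    rw [Finset.sum_range_succ']
    rw [hd0, mul_zero, add_zero]
    have estep : ∑ i ∈ Finset.range m, b (i + 1 + 1) * d (i + 1)
        = ∑ i ∈ Finset.range m, (fun j => b (j + 2)) i * (D (i + 1) - D i) := by
      apply Finset.sum_congr rfl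
      intro i _
      rw [hDstep i]
      ring
    rw [estep, abel_aux (fun j => b (j + 2)) D hD0 m]
    rw [hbbig (m + 2) (by omega), zero_mul, zero_add]
  have hid : a (m + 1) * D (m + 1)
      + (∑ i ∈ Finset.range (m + 1), (a i - a (i + 1)) * D (i + 1))
      + (∑ i ∈ Finset.range m, (b (i + 2) - b (i + 3)) * D (i + 1)) = 0 := by
    rw [e1, e2, e3] at hG0
    linarith
  have hn1 : 0 ≤ a (m + 1) * D (m + 1) :=
    mul_nonneg (hann (m + 1)) (hDnn (m + 1) le_rfl)
  have hn2 : ∀ i ∈ Finset.range (m + 1), 0 ≤ (a i - a (i + 1)) * D (i + 1) := by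
    intro i hi
    have hi' := Finset.mem_range.1 hi
    exact mul_nonneg (by linarith [hamono i]) (hDnn (i + 1) (by omega))
  have hn3 : ∀ i ∈ Finset.range m, 0 ≤ (b (i + 2) - b (i + 3)) * D (i + 1) := by
    intro i hi
    have hi' := Finset.mem_range.1 hi
    exact mul_nonneg (by linarith [hbmono (i + 2)]) (hDnn (i + 1) (by omega))
  have hS1 : ∑ i ∈ Finset.range (m + 1), (a i - a (i + 1)) * D (i + 1) = 0 := by
    have hs2 := Finset.sum_nonneg hn2
    have hs3 := Finset.sum_nonneg hn3
    linarith
  have hterm := (Finset.sum_eq_zero_iff_of_nonneg hn2).1 hS1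
  -- extraction by strong induction
  have key : ∀ i, i ≤ m + 1 → a i = b i := by
    intro i
    induction i using Nat.strong_induction_on with
    | _ i ih =>
      intro hi
      rcases Nat.eq_zero_or_pos i with rfl | hip
      · rw [ha0, hb0]
      have hi1 : i - 1 + 1 = i := by omega
      have hDprev : D (i - 1) = 0 := by
        have hz : ∀ j ∈ Finset.range i, d j = 0 := by
          intro j hj
          have hji := Finset.mem_range.1 hj
          have := ih j hji (by omega)
          simp only [hddef]
          rw [this]; ring
        simp only [hDdef]
        rw [hi1]
        exact Finset.sum_eq_zero hz
      have hDi : D i = d i := by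
        have := hDstep (i - 1)
        rw [hi1, hDprev, zero_add] at this
        exact this
      by_contra hne
      have hdne : d i ≠ 0 := by
        simp only [hddef]
        intro h
        exact hne (by linarith)
      have hDpos : 0 < D i := by
        have := hDnn i hi
        rcases lt_or_eq_of_le this with h | h
        · exact h
        · exact absurd (by rw [← hDi, ← h]) hdne
      have hco := hterm (i - 1) (Finset.mem_range.2 (by omega))
      rw [hi1] at hco
      have haa : a (i - 1) = a i := by
        rcases mul_eq_zero.1 hco with h | h
        · linarith
        · exact absurd h (by linarith)
      have hbb : b i ≤ b (i - 1) := by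
        have := hbmono (i - 1)
        rwa [hi1] at this
      have heqprev : a (i - 1) = b (i - 1) := ih (i - 1) (by omega) (by omega)
      have hdv : d i = b i - a i := by simp only [hddef]
      have : d i ≤ 0 := by linarith
      have : 0 < d i := by rw [← hDi]; exact hDpos
      linarith
  intro i h1 h2
  have h := key i h2
  rwa [haval i h1 h2, hbval i h1 h2] at h
end

section
/- Let p ≥ 0 and let α, β : ℕ → ℕ be eventually-zero non-increasing sequences with α_i ≤ p and β_i ≤ p for all i ≥ 1, and Σ_{i=1}^j α_i ≤ Σ_{i=1}^j β_i for all j ≥ 1. Then p·α₁ + Σ_{i≥1} α_i α_{i+1} ≤ p·β₁ + Σ_{i≥1} β_i β_{i+1}, with equality if and only if α = β. -/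
/-- Abel summation in ℕ: for a nonincreasing `u` vanishing at `N`,
`∑_{i<N} u i * v i = ∑_{i<N} (u i - u (i+1)) * (∑_{k≤i} v k)`. -/
lemma abel_sum_nat (u v : ℕ → ℕ) (hu : ∀ i, u (i + 1) ≤ u i) (N : ℕ) (hN : u N = 0) :
    ∑ i ∈ Finset.range N, u i * v i
      = ∑ i ∈ Finset.range N, (u i - u (i + 1)) * (∑ k ∈ Finset.range (i + 1), v k) := by
  have key : ∀ n, ∑ i ∈ Finset.range n, (u i - u (i + 1)) * (∑ k ∈ Finset.range (i + 1), v k)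
      + u n * (∑ k ∈ Finset.range n, v k) = ∑ i ∈ Finset.range n, u i * v i := by
    intro n
    induction n with
    | zero => simp
    | succ m ih =>
      obtain ⟨d, hd⟩ := Nat.exists_eq_add_of_le (hu m)
      rw [Finset.sum_range_succ, Finset.sum_range_succ, Finset.sum_range_succ
        (f := fun i => u i * v i), show u m - u (m + 1) = d from by omega, ← ih, hd]
      ring
  have h := key N
  rw [hN] at h
  simpa using h.symm

/-- Shift an `Icc 1` sum to a `range` sum. -/
lemma icc_shift_sum (f : ℕ → ℕ) (l : ℕ) :
    ∑ i ∈ Finset.Icc 1 (l + 1), f i = ∑ k ∈ Finset.range (l + 1), f (k + 1) := by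
  rw [← Finset.Ico_add_one_right_eq_Icc, Finset.sum_Ico_eq_sum_range]
  exact Finset.sum_congr (by norm_num) (fun k _ => by rw [Nat.add_comm])

/-- Infinite-sequence version of the products inequality, with equality
characterization: for eventually-zero non-increasing sequences bounded by p
with β weakly majorizing α,
p·α₁ + Σ_{i≥1} αᵢα_{i+1} ≤ p·β₁ + Σ_{i≥1} βᵢβ_{i+1},
with equality iff α = β (on indices ≥ 1). -/
theorem stmt_9 (p : ℕ) (α β : ℕ → ℕ)
    (hαmono : ∀ i, 1 ≤ i → α (i + 1) ≤ α i)
    (hβmono : ∀ i, 1 ≤ i → β (i + 1) ≤ β i)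
    (hαub : ∀ i, 1 ≤ i → α i ≤ p)
    (hβub : ∀ i, 1 ≤ i → β i ≤ p)
    (hα0 : ∃ N, ∀ i, N ≤ i → α i = 0)
    (hβ0 : ∃ N, ∀ i, N ≤ i → β i = 0)
    (hmaj : ∀ j, 1 ≤ j →
      ∑ i ∈ Finset.Icc 1 j, α i ≤ ∑ i ∈ Finset.Icc 1 j, β i) :
    (p * α 1 + ∑ᶠ i : ℕ, α (i + 1) * α (i + 2) ≤
      p * β 1 + ∑ᶠ i : ℕ, β (i + 1) * β (i + 2)) ∧
    ((p * α 1 + ∑ᶠ i : ℕ, α (i + 1) * α (i + 2) =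
      p * β 1 + ∑ᶠ i : ℕ, β (i + 1) * β (i + 2)) ↔
      ∀ i, 1 ≤ i → α i = β i) := by
  obtain ⟨Na, hNa⟩ := hα0
  obtain ⟨Nb, hNb⟩ := hβ0
  obtain ⟨N, hαN, hβN⟩ : ∃ N : ℕ, (∀ i, N ≤ i → α i = 0) ∧ (∀ i, N ≤ i → β i = 0) :=
    ⟨Na + Nb + 2, fun i hi => hNa i (by omega), fun i hi => hNb i (by omega)⟩
  -- convert the finsums to finite sums over `range N`
  have hfa : ∑ᶠ i : ℕ, α (i + 1) * α (i + 2) = ∑ i ∈ Finset.range N, α (i + 1) * α (i + 2) := by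
    apply finsum_eq_sum_of_support_subset
    intro x hx
    simp only [Function.mem_support, ne_eq] at hx
    simp only [Finset.coe_range, Set.mem_Iio]
    by_contra h
    exact hx (by rw [hαN (x + 1) (by omega)]; ring)
  have hfb : ∑ᶠ i : ℕ, β (i + 1) * β (i + 2) = ∑ i ∈ Finset.range N, β (i + 1) * β (i + 2) := by
    apply finsum_eq_sum_of_support_subset
    intro x hx
    simp only [Function.mem_support, ne_eq] at hx
    simp only [Finset.coe_range, Set.mem_Iio]
    by_contra h
    exact hx (by rw [hβN (x + 1) (by omega)]; ring)
  -- extended sequences with value p at index 0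
  set a : ℕ → ℕ := fun i => if i = 0 then p else α i with ha
  set b : ℕ → ℕ := fun i => if i = 0 then p else β i with hb
  have hamono : ∀ i, a (i + 1) ≤ a i := by
    intro i
    cases i with
    | zero => simpa [ha] using hαub 1 le_rfl
    | succ k => simpa [ha] using hαmono (k + 1) (by omega)
  have hbmono : ∀ i, b (i + 1) ≤ b i := by
    intro i
    cases i with
    | zero => simpa [hb] using hβub 1 le_rfl
    | succ k => simpa [hb] using hβmono (k + 1) (by omega)
  have haN : a (N + 1) = 0 := by simp [ha, hαN (N + 1) (by omega)]
  have hbN : b (N + 2) = 0 := by simp [hb, hβN (N + 2) (by omega)]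
  -- partial sums comparison (shifted form)
  have hS : ∀ m, ∑ k ∈ Finset.range m, α (k + 1) ≤ ∑ k ∈ Finset.range m, β (k + 1) := by
    intro m
    cases m with
    | zero => simp
    | succ l =>
      have h := hmaj (l + 1) (by omega)
      rwa [icc_shift_sum α l, icc_shift_sum β l] at h
  have hSa : ∀ m, ∑ k ∈ Finset.range m, a (k + 1) ≤ ∑ k ∈ Finset.range m, b (k + 1) := by
    intro m
    have h1 : ∑ k ∈ Finset.range m, a (k + 1) = ∑ k ∈ Finset.range m, α (k + 1) :=
      Finset.sum_congr rfl (fun k _ => by simp [ha])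
    have h2 : ∑ k ∈ Finset.range m, b (k + 1) = ∑ k ∈ Finset.range m, β (k + 1) :=
      Finset.sum_congr rfl (fun k _ => by simp [hb])
    rw [h1, h2]; exact hS m
  have hSa0 : ∀ m, ∑ k ∈ Finset.range m, a k ≤ ∑ k ∈ Finset.range m, b k := by
    intro m
    cases m with
    | zero => simp
    | succ l =>
      rw [Finset.sum_range_succ' a l, Finset.sum_range_succ' b l]
      exact Nat.add_le_add (hSa l) (by simp [ha, hb])
  -- the main chain, over range (N+1)
  have h1 : ∑ i ∈ Finset.range (N + 1), a i * a (i + 1)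
      = ∑ i ∈ Finset.range (N + 1), (a i - a (i + 1)) * (∑ k ∈ Finset.range (i + 1), a (k + 1)) :=
    abel_sum_nat a (fun k => a (k + 1)) hamono (N + 1) haN
  have h3 : ∑ i ∈ Finset.range (N + 1), (a i - a (i + 1)) * (∑ k ∈ Finset.range (i + 1), b (k + 1))
      = ∑ i ∈ Finset.range (N + 1), a i * b (i + 1) :=
    (abel_sum_nat a (fun k => b (k + 1)) hamono (N + 1) haN).symm
  have h2 : ∑ i ∈ Finset.range (N + 1), (a i - a (i + 1)) * (∑ k ∈ Finset.range (i + 1), a (k + 1))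
      ≤ ∑ i ∈ Finset.range (N + 1), (a i - a (i + 1)) * (∑ k ∈ Finset.range (i + 1), b (k + 1)) :=
    Finset.sum_le_sum (fun i _ => Nat.mul_le_mul_left _ (hSa (i + 1)))
  have h5 : ∑ i ∈ Finset.range (N + 1), b (i + 1) * a i
      = ∑ i ∈ Finset.range (N + 1), (b (i + 1) - b (i + 2)) * (∑ k ∈ Finset.range (i + 1), a k) :=
    abel_sum_nat (fun i => b (i + 1)) a (fun i => hbmono (i + 1)) (N + 1) hbN
  have h6 : ∑ i ∈ Finset.range (N + 1), (b (i + 1) - b (i + 2)) * (∑ k ∈ Finset.range (i + 1), a k)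
      ≤ ∑ i ∈ Finset.range (N + 1), (b (i + 1) - b (i + 2)) * (∑ k ∈ Finset.range (i + 1), b k) :=
    Finset.sum_le_sum (fun i _ => Nat.mul_le_mul_left _ (hSa0 (i + 1)))
  have h7 : ∑ i ∈ Finset.range (N + 1), (b (i + 1) - b (i + 2)) * (∑ k ∈ Finset.range (i + 1), b k)
      = ∑ i ∈ Finset.range (N + 1), b i * b (i + 1) := by
    rw [(abel_sum_nat (fun i => b (i + 1)) b (fun i => hbmono (i + 1)) (N + 1) hbN).symm]
    exact Finset.sum_congr rfl (fun i _ => Nat.mul_comm _ _)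
  have h4 : ∑ i ∈ Finset.range (N + 1), a i * b (i + 1)
      = ∑ i ∈ Finset.range (N + 1), b (i + 1) * a i :=
    Finset.sum_congr rfl (fun i _ => Nat.mul_comm _ _)
  have htail : ∑ i ∈ Finset.range (N + 1), a i * b (i + 1)
      ≤ ∑ i ∈ Finset.range (N + 1), b i * b (i + 1) := by
    rw [h4, h5, ← h7]; exact h6
  -- identification of the finite forms with the target expressions
  have Ea : p * α 1 + ∑ i ∈ Finset.range N, α (i + 1) * α (i + 2)
      = ∑ i ∈ Finset.range (N + 1), a i * a (i + 1) := by
    rw [Finset.sum_range_succ' (fun i => a i * a (i + 1)) N]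
    have hc : ∑ i ∈ Finset.range N, a (i + 1) * a (i + 1 + 1)
        = ∑ i ∈ Finset.range N, α (i + 1) * α (i + 2) :=
      Finset.sum_congr rfl (fun i _ => by simp [ha])
    have h0 : a 0 * a (0 + 1) = p * α 1 := by simp [ha]
    rw [hc, h0]
    exact Nat.add_comm _ _
  have Eb : p * β 1 + ∑ i ∈ Finset.range N, β (i + 1) * β (i + 2)
      = ∑ i ∈ Finset.range (N + 1), b i * b (i + 1) := by
    rw [Finset.sum_range_succ' (fun i => b i * b (i + 1)) N]
    have hc : ∑ i ∈ Finset.range N, b (i + 1) * b (i + 1 + 1)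
        = ∑ i ∈ Finset.range N, β (i + 1) * β (i + 2) :=
      Finset.sum_congr rfl (fun i _ => by simp [hb])
    have h0 : b 0 * b (0 + 1) = p * β 1 := by simp [hb]
    rw [hc, h0]
    exact Nat.add_comm _ _
  have hle : ∑ i ∈ Finset.range (N + 1), a i * a (i + 1)
      ≤ ∑ i ∈ Finset.range (N + 1), b i * b (i + 1) := by
    calc ∑ i ∈ Finset.range (N + 1), a i * a (i + 1)
        = _ := h1
      _ ≤ _ := h2
      _ = _ := h3
      _ ≤ _ := htail
  -- strict inequality when the sequences differ somewhere
  have hstrict : (∃ j, 1 ≤ j ∧ α j ≠ β j) →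
      ∑ i ∈ Finset.range (N + 1), a i * a (i + 1)
        < ∑ i ∈ Finset.range (N + 1), b i * b (i + 1) := by
    intro hne
    classical
    obtain ⟨m, hm1, hmne, hmmin⟩ : ∃ m, 1 ≤ m ∧ α m ≠ β m ∧ ∀ i < m, ¬(1 ≤ i ∧ α i ≠ β i) :=
      ⟨Nat.find hne, (Nat.find_spec hne).1, (Nat.find_spec hne).2,
        fun i hi => Nat.find_min hne hi⟩
    obtain ⟨m, rfl⟩ : ∃ l, m = l + 1 := ⟨m - 1, by omega⟩
    have hmin : ∀ i, 1 ≤ i → i < m + 1 → α i = β i := by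
      intro i hi1 hi2
      by_contra h
      exact hmmin i hi2 ⟨hi1, h⟩
    have hmN : m + 1 < N := by
      by_contra h
      exact hmne (by rw [hαN (m + 1) (by omega), hβN (m + 1) (by omega)])
    have hpre : ∑ k ∈ Finset.range m, α (k + 1) = ∑ k ∈ Finset.range m, β (k + 1) :=
      Finset.sum_congr rfl (fun k hk => hmin (k + 1) (by omega)
        (by simpa using Finset.mem_range.mp hk))
    have hab : α (m + 1) < β (m + 1) := by
      have h := hS (m + 1)
      rw [Finset.sum_range_succ, Finset.sum_range_succ, hpre] at h
      omega
    have hAB : ∑ k ∈ Finset.range (m + 1), a (k + 1) < ∑ k ∈ Finset.range (m + 1), b (k + 1) := by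
      have e1 : ∑ k ∈ Finset.range (m + 1), a (k + 1) = ∑ k ∈ Finset.range (m + 1), α (k + 1) :=
        Finset.sum_congr rfl (fun k _ => by simp [ha])
      have e2 : ∑ k ∈ Finset.range (m + 1), b (k + 1) = ∑ k ∈ Finset.range (m + 1), β (k + 1) :=
        Finset.sum_congr rfl (fun k _ => by simp [hb])
      rw [e1, e2, Finset.sum_range_succ, Finset.sum_range_succ, hpre]
      omega
    have hdrop : a (m + 1) < a m := by
      cases m with
      | zero =>
        have e1 : a 1 = α 1 := by simp [ha]
        have e0 : a 0 = p := by simp [ha]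
        have hub := hβub 1 le_rfl
        have hab' : α 1 < β 1 := hab
        show a 1 < a 0
        omega
      | succ l =>
        have e2 : a (l + 1 + 1) = α (l + 1 + 1) := by simp [ha]
        have e1 : a (l + 1) = α (l + 1) := by simp [ha]
        have he : α (l + 1) = β (l + 1) := hmin (l + 1) (by omega) (by omega)
        have hmono := hβmono (l + 1) (by omega)
        omega
    have h2' : ∑ i ∈ Finset.range (N + 1),
          (a i - a (i + 1)) * (∑ k ∈ Finset.range (i + 1), a (k + 1))
        < ∑ i ∈ Finset.range (N + 1),
          (a i - a (i + 1)) * (∑ k ∈ Finset.range (i + 1), b (k + 1)) := by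
      apply Finset.sum_lt_sum
      · exact fun i _ => Nat.mul_le_mul_left _ (hSa (i + 1))
      · refine ⟨m, Finset.mem_range.mpr (by omega), ?_⟩
        exact mul_lt_mul_of_pos_left hAB (by omega)
    calc ∑ i ∈ Finset.range (N + 1), a i * a (i + 1)
        = _ := h1
      _ < _ := h2'
      _ = _ := h3
      _ ≤ _ := htail
  constructor
  · rw [hfa, hfb, Ea, Eb]; exact hle
  constructor
  · intro heq
    by_contra hcon
    push_neg at hcon
    obtain ⟨j, hj1, hj2⟩ := hcon
    have hlt := hstrict ⟨j, hj1, hj2⟩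
    rw [hfa, hfb, Ea, Eb] at heq
    omega
  · intro hiff
    have e1 : α 1 = β 1 := hiff 1 le_rfl
    have e2 : ∑ᶠ i : ℕ, α (i + 1) * α (i + 2) = ∑ᶠ i : ℕ, β (i + 1) * β (i + 2) :=
      finsum_congr (fun i => by rw [hiff (i + 1) (by omega), hiff (i + 2) (by omega)])
    rw [e1, e2]
end

section
/- Let r, r', ℓ, ℓ' : ℕ → ℕ and, for each λ in a finite index set, W(λ), W'(λ) : ℕ → ℕ be eventually-zero non-increasing sequences satisfying: r'_i = r_i + 1 for 0 ≤ i ≤ p and r'_i = r_i for i > p; ℓ'_i = ℓ_i + 1 for 0 ≤ i ≤ q and ℓ'_i = ℓ_i for i > q; the index set contains λ₁,…,λ_s and positive integers n₁,…,n_s with n₁ + ⋯ + n_s = p + q + 1, W(λ_k)_i = W'(λ_k)_i + 1 for 1 ≤ i ≤ n_k and W(λ_k)_i = W'(λ_k)_i for i > n_k, and W(λ) = W'(λ) for λ ∉ {λ₁,…,λ_s}. Define m = Σ_{i≥1} r'_i + Σ_{i≥0} ℓ'_i + Σ_λ Σ_{i≥1} W'(λ)_i and n = Σ_{i≥0} r'_i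 + Σ_{i≥1} ℓ'_i + Σ_λ Σ_{i≥1} W'(λ)_i. Then Σ_{i≥0} r_i r_{i+1} + Σ_{i≥0} ℓ_i ℓ_{i+1} + Σ_λ Σ_{i≥1} W'(λ)_i² + (m+n) ≥ Σ_{i≥0} r'_i r'_{i+1} + Σ_{i≥0} ℓ'_i ℓ'_{i+1} + Σ_λ Σ_{i≥1} W(λ)_i² + 1. -/
lemma finsum_nat_eq_range {f : ℕ → ℕ} {N : ℕ} (h : ∀ i, N ≤ i → f i = 0) :
    ∑ᶠ i, f i = ∑ i ∈ Finset.range N, f i := by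
  apply finsum_eq_finset_sum_of_support_subset
  intro i hi
  simp only [Finset.coe_range, Set.mem_Iio]
  by_contra hc
  exact hi (h i (le_of_not_gt hc))

lemma sum_ite_lt (p N : ℕ) (hp : p ≤ N) :
    ∑ i ∈ Finset.range N, (if i < p then 1 else 0) = p := by
  calc ∑ i ∈ Finset.range N, (if i < p then (1:ℕ) else 0)
      = ∑ i ∈ Finset.range p, (if i < p then (1:ℕ) else 0) :=
        (Finset.sum_subset (Finset.range_subset_range.2 hp)
          (fun x _ hx => by simp [Finset.mem_range] at hx ⊢; omega)).symm
    _ = ∑ _i ∈ Finset.range p, 1 :=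
        Finset.sum_congr rfl (fun i hi => if_pos (Finset.mem_range.1 hi))
    _ = p := by simp

lemma key1 (p N : ℕ) (hN : p + 1 ≤ N) (r r' : ℕ → ℕ)
    (hr : ∀ i, i ≤ p → r' i = r i + 1) (hrgt : ∀ i, p < i → r' i = r i) :
    (∑ i ∈ Finset.range N, r' i * r' (i + 1)) + r' p + p ≤
      (∑ i ∈ Finset.range N, r i * r (i + 1)) + (∑ i ∈ Finset.range N, r' i) +
        (∑ i ∈ Finset.range N, r' (i + 1)) := by
  have hpt : ∀ i ∈ Finset.range N,
      r' i * r' (i + 1) + ((if i = p then r' p else 0) + (if i < p then 1 else 0)) =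
      r i * r (i + 1) + (if i ≤ p then r' i + r' (i + 1) else 0) := by
    intro i _
    rcases lt_trichotomy i p with h | h | h
    · rw [if_neg h.ne, if_pos h, if_pos h.le, hr i h.le, hr (i + 1) (by omega)]
      ring
    · subst h
      rw [if_pos rfl, if_neg (lt_irrefl i), if_pos le_rfl, hr i le_rfl,
        hrgt (i + 1) (by omega)]
      ring
    · rw [if_neg (by omega), if_neg (by omega), if_neg (by omega),
        hrgt i h, hrgt (i + 1) (by omega)]
  have e1 : (∑ i ∈ Finset.range N, (r' i * r' (i + 1) +
      ((if i = p then r' p else 0) + (if i < p then 1 else 0)))) =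
      ∑ i ∈ Finset.range N,
        (r i * r (i + 1) + (if i ≤ p then r' i + r' (i + 1) else 0)) :=
    Finset.sum_congr rfl hpt
  rw [Finset.sum_add_distrib, Finset.sum_add_distrib,
    Finset.sum_ite_eq' (Finset.range N) p (fun _ => r' p),
    if_pos (Finset.mem_range.2 (by omega)), sum_ite_lt p N (by omega),
    Finset.sum_add_distrib] at e1
  have h2 : ∑ i ∈ Finset.range N, (if i ≤ p then r' i + r' (i + 1) else 0) ≤
      (∑ i ∈ Finset.range N, r' i) + ∑ i ∈ Finset.range N, r' (i + 1) := by
    rw [← Finset.sum_add_distrib]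
    apply Finset.sum_le_sum
    intro i _
    split_ifs
    · exact le_rfl
    · exact Nat.zero_le _
  omega

lemma key2 (nk N : ℕ) (hN : nk ≤ N) (w w' : ℕ → ℕ)
    (hW : ∀ i, 1 ≤ i → i ≤ nk → w i = w' i + 1)
    (hWgt : ∀ i, nk < i → w i = w' i) :
    ∑ i ∈ Finset.range N, w (i + 1) ^ 2 ≤
      (∑ i ∈ Finset.range N, w' (i + 1) ^ 2) +
        2 * (∑ i ∈ Finset.range N, w' (i + 1)) + nk := by
  have hpt : ∀ i ∈ Finset.range N,
      w (i + 1) ^ 2 ≤ w' (i + 1) ^ 2 + 2 * w' (i + 1) + (if i < nk then 1 else 0) := by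
    intro i _
    by_cases h : i < nk
    · rw [hW (i + 1) (by omega) (by omega), if_pos h]
      have h3 : (w' (i + 1) + 1) ^ 2 = w' (i + 1) ^ 2 + 2 * w' (i + 1) + 1 := by ring
      exact h3.le
    · rw [hWgt (i + 1) (by omega), if_neg h, Nat.add_zero]
      exact Nat.le_add_right _ _
  calc ∑ i ∈ Finset.range N, w (i + 1) ^ 2
      ≤ ∑ i ∈ Finset.range N,
          (w' (i + 1) ^ 2 + 2 * w' (i + 1) + (if i < nk then 1 else 0)) :=
        Finset.sum_le_sum hpt
    _ = _ := by
        rw [Finset.sum_add_distrib, Finset.sum_add_distrib, sum_ite_lt nk N hN,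
          ← Finset.mul_sum]

/-- Combinatorial core of the rank-drop case (rule 6,
L_p ⊕ L_qᵀ ⇝ ⊕ J_{n_k}(λ_k)) in the proof of the main theorem: the
codimension increases by at least 1 under this change. -/
theorem stmt_11 (p q : ℕ) (r r' l l' : ℕ → ℕ)
    (Λ : Type*) [Fintype Λ] (W W' : Λ → ℕ → ℕ)
    (s : ℕ) (lam : Fin s → Λ) (hlam : Function.Injective lam)
    (nk : Fin s → ℕ) (hnk : ∀ k, 1 ≤ nk k)
    (hnksum : ∑ k : Fin s, nk k = p + q + 1)
    -- non-increasing, eventually zero data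
    (hrmono : ∀ i, r (i + 1) ≤ r i) (hr'mono : ∀ i, r' (i + 1) ≤ r' i)
    (hlmono : ∀ i, l (i + 1) ≤ l i) (hl'mono : ∀ i, l' (i + 1) ≤ l' i)
    (hWmono : ∀ a, ∀ i, 1 ≤ i → W a (i + 1) ≤ W a i)
    (hW'mono : ∀ a, ∀ i, 1 ≤ i → W' a (i + 1) ≤ W' a i)
    (hr0 : ∃ N, ∀ i, N ≤ i → r i = 0) (hr'0 : ∃ N, ∀ i, N ≤ i → r' i = 0)
    (hl0 : ∃ N, ∀ i, N ≤ i → l i = 0) (hl'0 : ∃ N, ∀ i, N ≤ i → l' i = 0)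
    (hW0 : ∀ a, ∃ N, ∀ i, N ≤ i → W a i = 0)
    (hW'0 : ∀ a, ∃ N, ∀ i, N ≤ i → W' a i = 0)
    -- the relation between the primed and unprimed data
    (hr : ∀ i, i ≤ p → r' i = r i + 1) (hrgt : ∀ i, p < i → r' i = r i)
    (hl : ∀ i, i ≤ q → l' i = l i + 1) (hlgt : ∀ i, q < i → l' i = l i)
    (hW : ∀ k : Fin s, ∀ i, 1 ≤ i → i ≤ nk k →
      W (lam k) i = W' (lam k) i + 1)
    (hWgt : ∀ k : Fin s, ∀ i, nk k < i → W (lam k) i = W' (lam k) i)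
    (hWother : ∀ a : Λ, (∀ k, lam k ≠ a) → W a = W' a)
    -- standing positivity hypotheses
    (hr'p : 1 ≤ r' p) (hl'q : 1 ≤ l' q)
    -- the sizes m and n
    (m n : ℕ)
    (hm : m = (∑ᶠ i : ℕ, r' (i + 1)) + (∑ᶠ i : ℕ, l' i) +
      ∑ᶠ a : Λ, ∑ᶠ i : ℕ, W' a (i + 1))
    (hn : n = (∑ᶠ i : ℕ, r' i) + (∑ᶠ i : ℕ, l' (i + 1)) +
      ∑ᶠ a : Λ, ∑ᶠ i : ℕ, W' a (i + 1)) :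
    (∑ᶠ i : ℕ, r' i * r' (i + 1)) + (∑ᶠ i : ℕ, l' i * l' (i + 1)) +
      (∑ᶠ a : Λ, ∑ᶠ i : ℕ, (W a (i + 1)) ^ 2) + 1 ≤
    (∑ᶠ i : ℕ, r i * r (i + 1)) + (∑ᶠ i : ℕ, l i * l (i + 1)) +
      (∑ᶠ a : Λ, ∑ᶠ i : ℕ, (W' a (i + 1)) ^ 2) + (m + n) := by
  classical
  obtain ⟨N1, hN1⟩ := hr0
  obtain ⟨N2, hN2⟩ := hr'0
  obtain ⟨N3, hN3⟩ := hl0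
  obtain ⟨N4, hN4⟩ := hl'0
  choose NW hNW using hW0
  choose NW' hNW' using hW'0
  set N : ℕ := N1 + N2 + N3 + N4 + Finset.univ.sup NW + Finset.univ.sup NW' +
    (p + q + 2) with hNdef
  have hNWle : ∀ a : Λ, NW a ≤ N := fun a => by
    have := Finset.le_sup (f := NW) (Finset.mem_univ a); omega
  have hNW'le : ∀ a : Λ, NW' a ≤ N := fun a => by
    have := Finset.le_sup (f := NW') (Finset.mem_univ a); omega
  -- rewrite all finsums as sums over `range N`
  have er' : (∑ᶠ i : ℕ, r' i * r' (i + 1)) =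
      ∑ i ∈ Finset.range N, r' i * r' (i + 1) :=
    finsum_nat_eq_range (fun i hi => by rw [hN2 i (by omega)]; ring)
  have el' : (∑ᶠ i : ℕ, l' i * l' (i + 1)) =
      ∑ i ∈ Finset.range N, l' i * l' (i + 1) :=
    finsum_nat_eq_range (fun i hi => by rw [hN4 i (by omega)]; ring)
  have er : (∑ᶠ i : ℕ, r i * r (i + 1)) =
      ∑ i ∈ Finset.range N, r i * r (i + 1) :=
    finsum_nat_eq_range (fun i hi => by rw [hN1 i (by omega)]; ring)
  have el : (∑ᶠ i : ℕ, l i * l (i + 1)) =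
      ∑ i ∈ Finset.range N, l i * l (i + 1) :=
    finsum_nat_eq_range (fun i hi => by rw [hN3 i (by omega)]; ring)
  have er'0 : (∑ᶠ i : ℕ, r' i) = ∑ i ∈ Finset.range N, r' i :=
    finsum_nat_eq_range (fun i hi => hN2 i (by omega))
  have er'1 : (∑ᶠ i : ℕ, r' (i + 1)) = ∑ i ∈ Finset.range N, r' (i + 1) :=
    finsum_nat_eq_range (fun i hi => hN2 (i + 1) (by omega))
  have el'0 : (∑ᶠ i : ℕ, l' i) = ∑ i ∈ Finset.range N, l' i :=
    finsum_nat_eq_range (fun i hi => hN4 i (by omega))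
  have el'1 : (∑ᶠ i : ℕ, l' (i + 1)) = ∑ i ∈ Finset.range N, l' (i + 1) :=
    finsum_nat_eq_range (fun i hi => hN4 (i + 1) (by omega))
  have eW : (∑ᶠ a : Λ, ∑ᶠ i : ℕ, (W a (i + 1)) ^ 2) =
      ∑ a, ∑ i ∈ Finset.range N, W a (i + 1) ^ 2 := by
    rw [finsum_eq_sum_of_fintype]
    exact Finset.sum_congr rfl fun a _ => finsum_nat_eq_range (fun i hi => by
      rw [hNW a (i + 1) (by have := hNWle a; omega)]; ring)
  have eW' : (∑ᶠ a : Λ, ∑ᶠ i : ℕ, (W' a (i + 1)) ^ 2) =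
      ∑ a, ∑ i ∈ Finset.range N, W' a (i + 1) ^ 2 := by
    rw [finsum_eq_sum_of_fintype]
    exact Finset.sum_congr rfl fun a _ => finsum_nat_eq_range (fun i hi => by
      rw [hNW' a (i + 1) (by have := hNW'le a; omega)]; ring)
  have eW'1 : (∑ᶠ a : Λ, ∑ᶠ i : ℕ, W' a (i + 1)) =
      ∑ a, ∑ i ∈ Finset.range N, W' a (i + 1) := by
    rw [finsum_eq_sum_of_fintype]
    exact Finset.sum_congr rfl fun a _ => finsum_nat_eq_range (fun i hi =>
      hNW' a (i + 1) (by have := hNW'le a; omega))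
  rw [er'1, el'0, eW'1] at hm
  rw [er'0, el'1, eW'1] at hn
  rw [er', el', er, el, eW, eW', hm, hn]
  -- the three key inequalities
  have H1 := key1 p N (by omega) r r' hr hrgt
  have H2 := key1 q N (by omega) l l' hl hlgt
  -- the W-part
  have hnkle : ∀ k, nk k ≤ N := fun k => by
    have h1 : nk k ≤ ∑ k : Fin s, nk k :=
      Finset.single_le_sum (fun _ _ => Nat.zero_le _) (Finset.mem_univ k)
    omega
  set T : Finset Λ := Finset.univ.image lam with hT
  have himg : ∀ F : Λ → ℕ, ∑ a ∈ T, F a = ∑ k, F (lam k) := fun F =>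
    Finset.sum_image (fun k _ k' _ h => hlam h)
  have hsplitW : ∑ a ∈ Finset.univ \ T, (∑ i ∈ Finset.range N, W a (i + 1) ^ 2) +
      ∑ a ∈ T, (∑ i ∈ Finset.range N, W a (i + 1) ^ 2) =
      ∑ a, ∑ i ∈ Finset.range N, W a (i + 1) ^ 2 :=
    Finset.sum_sdiff (Finset.subset_univ T)
  have hsplitW' : ∑ a ∈ Finset.univ \ T, (∑ i ∈ Finset.range N, W' a (i + 1) ^ 2) +
      ∑ a ∈ T, (∑ i ∈ Finset.range N, W' a (i + 1) ^ 2) =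
      ∑ a, ∑ i ∈ Finset.range N, W' a (i + 1) ^ 2 :=
    Finset.sum_sdiff (Finset.subset_univ T)
  have hout : ∑ a ∈ Finset.univ \ T, (∑ i ∈ Finset.range N, W a (i + 1) ^ 2) =
      ∑ a ∈ Finset.univ \ T, (∑ i ∈ Finset.range N, W' a (i + 1) ^ 2) := by
    refine Finset.sum_congr rfl fun a ha => ?_
    have hwa : W a = W' a := hWother a (fun k hk =>
      (Finset.mem_sdiff.1 ha).2 (hk ▸ Finset.mem_image_of_mem lam (Finset.mem_univ k)))
    rw [hwa]
  have hin : ∑ k, (∑ i ∈ Finset.range N, W (lam k) (i + 1) ^ 2) ≤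
      ∑ k, ((∑ i ∈ Finset.range N, W' (lam k) (i + 1) ^ 2) +
        2 * (∑ i ∈ Finset.range N, W' (lam k) (i + 1)) + nk k) :=
    Finset.sum_le_sum (fun k _ => key2 (nk k) N (hnkle k) _ _ (hW k) (hWgt k))
  rw [Finset.sum_add_distrib, Finset.sum_add_distrib, hnksum, ← Finset.mul_sum] at hin
  have hHle : ∑ k, (∑ i ∈ Finset.range N, W' (lam k) (i + 1)) ≤
      ∑ a, ∑ i ∈ Finset.range N, W' a (i + 1) := by
    have h := himg (fun a => ∑ i ∈ Finset.range N, W' a (i + 1))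
    rw [← h]
    exact Finset.sum_le_sum_of_subset (Finset.subset_univ T)
  have himgW := himg (fun a => ∑ i ∈ Finset.range N, W a (i + 1) ^ 2)
  have himgW' := himg (fun a => ∑ i ∈ Finset.range N, W' a (i + 1) ^ 2)
  have HW : (∑ a, ∑ i ∈ Finset.range N, W a (i + 1) ^ 2) ≤
      (∑ a, ∑ i ∈ Finset.range N, W' a (i + 1) ^ 2) +
        2 * (∑ a, ∑ i ∈ Finset.range N, W' a (i + 1)) + (p + q + 1) := by
    omega
  omega
end

section
/- Let α, β : ℕ → ℕ be non-increasing eventually-zero sequences and h ≥ 0 an integer such that Σ_{i=1}^j β_i ≤ Σ_{i=1}^j (α_i + h) for all j ≥ 1, and suppose h = 0. Then for every j, β₁ + ⋯ + β_j ≤ α₁ + ⋯ + α_j, and consequently if additionally Σ_{i≥1} α_i = Σ_{i≥1} β_i and Σ_{i≥1} α_i² = Σ_{i≥1} β_i², then α = β. -/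
lemma aux_finsum_icc (f : ℕ → ℕ) (N M : ℕ) (hN : ∀ i, N ≤ i → f i = 0) (hM : N ≤ M) :
    ∑ᶠ i : ℕ, f (i + 1) = ∑ i ∈ Finset.Icc 1 M, f i := by
  rw [finsum_eq_finset_sum_of_support_subset _ (s := Finset.range M)]
  · rw [show Finset.Icc 1 M = Finset.Ico 1 (M+1) by rw [Finset.Ico_add_one_right_eq_Icc],
      Finset.sum_Ico_eq_sum_range]
    simp only [Nat.add_sub_cancel]
    exact Finset.sum_congr rfl (fun i _ => by rw [add_comm])
  · intro x hx
    simp only [Function.mem_support] at hx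
    simp only [Finset.coe_range, Set.mem_Iio]
    by_contra hxM
    exact hx (hN _ (by omega))

/-- Weak majorization with shift h specialized to h = 0: the partial-sum
inequalities hold without shift, and equal sums together with equal sums of
squares force the sequences to coincide. -/
theorem stmt_16 (α β : ℕ → ℕ) (h : ℕ)
    (hαmono : ∀ i, 1 ≤ i → α (i + 1) ≤ α i)
    (hβmono : ∀ i, 1 ≤ i → β (i + 1) ≤ β i)
    (hα0 : ∃ N, ∀ i, N ≤ i → α i = 0)
    (hβ0 : ∃ N, ∀ i, N ≤ i → β i = 0)
    (hmaj : ∀ j, 1 ≤ j →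
      ∑ i ∈ Finset.Icc 1 j, β i ≤ ∑ i ∈ Finset.Icc 1 j, (α i + h))
    (hh : h = 0) :
    (∀ j, 1 ≤ j →
      ∑ i ∈ Finset.Icc 1 j, β i ≤ ∑ i ∈ Finset.Icc 1 j, α i) ∧
    ((∑ᶠ i : ℕ, α (i + 1)) = (∑ᶠ i : ℕ, β (i + 1)) →
      (∑ᶠ i : ℕ, (α (i + 1)) ^ 2) = (∑ᶠ i : ℕ, (β (i + 1)) ^ 2) →
      ∀ i, 1 ≤ i → α i = β i) := by
  subst hh
  have part1 : ∀ j, 1 ≤ j →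
      ∑ i ∈ Finset.Icc 1 j, β i ≤ ∑ i ∈ Finset.Icc 1 j, α i := by
    intro j hj
    simpa using hmaj j hj
  refine ⟨part1, ?_⟩
  intro hsum hsq
  obtain ⟨N₁, hN₁⟩ := hα0
  obtain ⟨N₂, hN₂⟩ := hβ0
  -- the partial-sum difference, in ℤ
  set S : ℕ → ℤ := fun j => ∑ i ∈ Finset.Icc 1 j, ((α i : ℤ) - β i) with hS
  set w : ℕ → ℤ := fun j => (α j : ℤ) + β j with hw
  have hS0 : S 0 = 0 := by simp [hS]
  have hSsucc : ∀ j, S (j + 1) = S j + ((α (j+1) : ℤ) - β (j+1)) := by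
    intro j
    exact Finset.sum_Icc_succ_top (by omega) _
  have hSnonneg : ∀ j, 0 ≤ S j := by
    intro j
    rcases Nat.eq_zero_or_pos j with rfl | hj
    · simp [hS0]
    · have := part1 j hj
      have : (∑ i ∈ Finset.Icc 1 j, (β i : ℤ)) ≤ ∑ i ∈ Finset.Icc 1 j, (α i : ℤ) := by
        exact_mod_cast this
      simp only [hS, Finset.sum_sub_distrib]
      omega
  have hSzero : ∀ M, N₁ ≤ M → N₂ ≤ M → S M = 0 := by
    intro M h1 h2
    have e1 := aux_finsum_icc α N₁ M hN₁ h1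
    have e2 := aux_finsum_icc β N₂ M hN₂ h2
    have : (∑ i ∈ Finset.Icc 1 M, α i) = ∑ i ∈ Finset.Icc 1 M, β i := by
      rw [← e1, ← e2]; exact hsum
    have : (∑ i ∈ Finset.Icc 1 M, (α i : ℤ)) = ∑ i ∈ Finset.Icc 1 M, (β i : ℤ) := by
      exact_mod_cast this
    simp only [hS, Finset.sum_sub_distrib]
    omega
  have hsqzero : ∀ M, N₁ ≤ M → N₂ ≤ M →
      (∑ i ∈ Finset.Icc 1 M, ((α i : ℤ)^2 - (β i : ℤ)^2)) = 0 := by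
    intro M h1 h2
    have e1 := aux_finsum_icc (fun i => (α i)^2) N₁ M (fun i hi => by simp [hN₁ i hi]) h1
    have e2 := aux_finsum_icc (fun i => (β i)^2) N₂ M (fun i hi => by simp [hN₂ i hi]) h2
    have : (∑ i ∈ Finset.Icc 1 M, (α i)^2) = ∑ i ∈ Finset.Icc 1 M, (β i)^2 := by
      rw [← e1, ← e2]; exact hsq
    have : (∑ i ∈ Finset.Icc 1 M, ((α i : ℤ))^2) = ∑ i ∈ Finset.Icc 1 M, ((β i : ℤ))^2 := by
      exact_mod_cast this
    rw [Finset.sum_sub_distrib]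
    omega
  -- Abel summation identity
  have habel : ∀ M : ℕ,
      (∑ i ∈ Finset.Icc 1 M, ((α i : ℤ)^2 - (β i : ℤ)^2)) =
      (∑ j ∈ Finset.Icc 1 M, S j * (w j - w (j+1))) + S M * w (M+1) := by
    intro M
    induction M with
    | zero => simp [hS0]
    | succ M ih =>
      rw [Finset.sum_Icc_succ_top (by omega : 1 ≤ M + 1),
          Finset.sum_Icc_succ_top (by omega : 1 ≤ M + 1), ih, hSsucc M]
      have : ((α (M+1) : ℤ)^2 - (β (M+1) : ℤ)^2) =
          ((α (M+1) : ℤ) - β (M+1)) * w (M+1) := by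
        simp only [hw]; ring
      rw [this]; ring
  -- every term of the Abel sum vanishes
  have hterm : ∀ j, 1 ≤ j → S j * (w j - w (j+1)) = 0 := by
    intro j hj
    set M := max (max N₁ N₂) j with hM
    have h1 : N₁ ≤ M := le_trans (le_max_left _ _) (le_max_left _ _)
    have h2 : N₂ ≤ M := le_trans (le_max_right _ _) (le_max_left _ _)
    have hjM : j ≤ M := le_max_right _ _
    have habM := habel M
    rw [hsqzero M h1 h2, hSzero M h1 h2, zero_mul, add_zero] at habM
    have hnn : ∀ i ∈ Finset.Icc 1 M, 0 ≤ S i * (w i - w (i+1)) := by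
      intro i hi
      simp only [Finset.mem_Icc] at hi
      have hwmono : w (i+1) ≤ w i := by
        have := hαmono i hi.1
        have := hβmono i hi.1
        simp only [hw]
        omega
      exact mul_nonneg (hSnonneg i) (by omega)
    have := (Finset.sum_eq_zero_iff_of_nonneg hnn).mp habM.symm
    exact this j (Finset.mem_Icc.mpr ⟨hj, hjM⟩)
  -- main induction
  intro i
  induction i using Nat.strong_induction_on with
  | _ i ih =>
    intro hi
    by_contra hne
    have hSprev : S (i - 1) = 0 := by
      apply Finset.sum_eq_zero
      intro x hx
      simp only [Finset.mem_Icc] at hx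
      have : α x = β x := ih x (by omega) hx.1
      simp [this]
    have hSi : S i = (α i : ℤ) - β i := by
      have : i = (i - 1) + 1 := by omega
      rw [this, hSsucc, hSprev, zero_add, ← this]
    have hd : (β i : ℤ) < α i := by
      have h1 := hSnonneg i
      rw [hSi] at h1
      have : (α i : ℤ) ≠ β i := by exact_mod_cast fun hc => hne (by exact_mod_cast hc)
      omega
    have hgrow : ∀ j, i ≤ j → α j = α i ∧ β j = β i ∧ 0 < S j := by
      intro j hj
      induction j, hj using Nat.le_induction with
      | base => exact ⟨rfl, rfl, by rw [hSi]; omega⟩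
      | succ j hij ihj =>
        obtain ⟨hαj, hβj, hSj⟩ := ihj
        have hj1 : 1 ≤ j := le_trans hi hij
        have hwj : w j - w (j+1) = 0 := by
          have := hterm j hj1
          rcases mul_eq_zero.mp this with h | h
          · omega
          · exact h
        have hα1 := hαmono j hj1
        have hβ1 := hβmono j hj1
        have heq : α (j+1) = α j ∧ β (j+1) = β j := by
          simp only [hw] at hwj
          constructor <;> omega
        refine ⟨heq.1.trans hαj, heq.2.trans hβj, ?_⟩
        rw [hSsucc, heq.1, heq.2, hαj, hβj]
        omega
    obtain ⟨hαJ, _, _⟩ := hgrow (max i N₁) (le_max_left _ _)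
    have : α (max i N₁) = 0 := hN₁ _ (le_max_right _ _)
    omega
end

section
/- Let r_L, r_M, ℓ_L, ℓ_M : ℕ → ℕ be eventually-zero non-increasing sequences and, for λ in a finite set Λ, W_L(λ), W_M(λ) : ℕ → ℕ eventually-zero non-increasing sequences, with r_L(0) = r_M(0) =: p, ℓ_L(0) = ℓ_M(0) =: q, r_L(i), r_M(i) ≤ p and ℓ_L(i), ℓ_M(i) ≤ q for all i. Assume (M1) Σ_{i=1}^j r_M(i) ≤ Σ_{i=1}^j r_L(i), (M2) Σ_{i=1}^j ℓ_M(i) ≤ Σ_{i=1}^j ℓ_L(i), and (M3) Σ_{i=1}^j W_L(λ)_i ≤ Σ_{i=1}^j W_M(λ)_i, for all j ≥ 1 and λ ∈ Λ. Then −Σ_{i≥0} r_L(i) r_L(i+1) − Σ_{i≥0} ℓ_L(i) ℓ_L(i+1) + Σ_{λ} Σ_{i≥1} W_L(λ)_i² ≤ −Σ_{i≥0} r_M(i) r_M(i+1) − Σ_{i≥0} ℓ_M(i) ℓ_M(i+1) + Σ_{λ} Σ_{i≥1} W_M(λ)_i², with equality if and only if r_L = r_M, ℓ_L = ℓ_M,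 and W_L(λ) = W_M(λ) for all λ ∈ Λ. -/
open Finset

private lemma abel_identity (w x : ℕ → ℤ) (N : ℕ) :
    ∑ i ∈ range N, w i * x i
      = ∑ j ∈ range N, (w j - w (j + 1)) * (∑ i ∈ range (j + 1), x i)
        + w N * ∑ i ∈ range N, x i := by
  induction N with
  | zero => simp
  | succ n ih =>
    rw [sum_range_succ (fun i => w i * x i), ih,
      sum_range_succ (fun j => (w j - w (j + 1)) * ∑ i ∈ range (j + 1), x i),
      sum_range_succ x n]
    ring

private lemma abel_le (w x y : ℕ → ℤ) (N : ℕ)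
    (hw : ∀ i, w (i + 1) ≤ w i)
    (hD : ∀ j, ∑ i ∈ range j, x i ≤ ∑ i ∈ range j, y i)
    (hwN : w N = 0) :
    ∑ i ∈ range N, w i * x i ≤ ∑ i ∈ range N, w i * y i := by
  rw [abel_identity w x N, abel_identity w y N, hwN]
  simp only [zero_mul, add_zero]
  refine sum_le_sum fun j _ => ?_
  exact mul_le_mul_of_nonneg_left (hD (j + 1)) (by linarith [hw j])

private lemma abel_eq (w x y : ℕ → ℤ) (N : ℕ)
    (hw : ∀ i, w (i + 1) ≤ w i)
    (hD : ∀ j, ∑ i ∈ range j, x i ≤ ∑ i ∈ range j, y i)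
    (hwN : w N = 0)
    (heq : ∑ i ∈ range N, w i * x i = ∑ i ∈ range N, w i * y i) :
    ∀ j, j < N → w (j + 1) < w j →
      ∑ i ∈ range (j + 1), x i = ∑ i ∈ range (j + 1), y i := by
  have h0 : ∑ j ∈ range N,
      (w j - w (j + 1)) * ((∑ i ∈ range (j + 1), y i) - ∑ i ∈ range (j + 1), x i) = 0 := by
    have hx := abel_identity w x N
    have hy := abel_identity w y N
    rw [hwN, zero_mul, add_zero] at hx hy
    have hsplit : ∑ j ∈ range N,
        (w j - w (j + 1)) * ((∑ i ∈ range (j + 1), y i) - ∑ i ∈ range (j + 1), x i)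
        = (∑ j ∈ range N, (w j - w (j + 1)) * (∑ i ∈ range (j + 1), y i))
          - ∑ j ∈ range N, (w j - w (j + 1)) * (∑ i ∈ range (j + 1), x i) := by
      rw [← sum_sub_distrib]
      exact sum_congr rfl fun j _ => by ring
    rw [hsplit, ← hx, ← hy]
    linarith
  have hterm := (Finset.sum_eq_zero_iff_of_nonneg (fun j _ => by
    have h1 := hw j
    have h2 := hD (j + 1)
    exact mul_nonneg (by linarith) (by linarith))).mp h0
  intro j hj hdrop
  have := hterm j (mem_range.mpr hj)
  rcases mul_eq_zero.mp this with h | h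
  · exfalso; linarith
  · linarith

private lemma sq_case (x y : ℕ → ℕ) (N : ℕ)
    (hx : ∀ i, x (i + 1) ≤ x i) (hy : ∀ i, y (i + 1) ≤ y i)
    (hxN : ∀ i, N ≤ i → x i = 0) (hyN : ∀ i, N ≤ i → y i = 0)
    (hD : ∀ j, ∑ i ∈ range j, x i ≤ ∑ i ∈ range j, y i) :
    (∑ i ∈ range N, (x i : ℤ) ^ 2 ≤ ∑ i ∈ range N, (y i : ℤ) ^ 2) ∧
      ((∑ i ∈ range N, (x i : ℤ) ^ 2 = ∑ i ∈ range N, (y i : ℤ) ^ 2) →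
        ∀ i, x i = y i) := by
  have hw : ∀ i, ((x (i + 1) : ℤ) + y (i + 1)) ≤ (x i : ℤ) + y i := fun i => by
    have h1 := hx i; have h2 := hy i
    push_cast; omega
  have hDZ : ∀ j, ∑ i ∈ range j, (x i : ℤ) ≤ ∑ i ∈ range j, (y i : ℤ) := fun j => by
    exact_mod_cast hD j
  have hwN : ((x N : ℤ) + y N) = 0 := by rw [hxN N le_rfl, hyN N le_rfl]; norm_num
  have hle := abel_le (fun i => (x i : ℤ) + y i) (fun i => (x i : ℤ)) (fun i => (y i : ℤ))
    N hw hDZ hwN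
  have hidx : ∑ i ∈ range N, ((x i : ℤ) + y i) * (x i : ℤ)
      = ∑ i ∈ range N, ((x i : ℤ) ^ 2 + x i * y i) := sum_congr rfl fun i _ => by ring
  have hidy : ∑ i ∈ range N, ((x i : ℤ) + y i) * (y i : ℤ)
      = ∑ i ∈ range N, ((y i : ℤ) ^ 2 + x i * y i) := sum_congr rfl fun i _ => by ring
  have hsx : ∑ i ∈ range N, ((x i : ℤ) ^ 2 + x i * y i)
      = (∑ i ∈ range N, (x i : ℤ) ^ 2) + ∑ i ∈ range N, (x i : ℤ) * y i :=
    sum_add_distrib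
  have hsy : ∑ i ∈ range N, ((y i : ℤ) ^ 2 + x i * y i)
      = (∑ i ∈ range N, (y i : ℤ) ^ 2) + ∑ i ∈ range N, (x i : ℤ) * y i :=
    sum_add_distrib
  constructor
  · rw [hidx, hidy, hsx, hsy] at hle; linarith
  · intro heq
    have heq' : ∑ i ∈ range N, ((x i : ℤ) + y i) * (x i : ℤ)
        = ∑ i ∈ range N, ((x i : ℤ) + y i) * (y i : ℤ) := by
      rw [hidx, hidy, hsx, hsy, heq]
    have habel := abel_eq (fun i => (x i : ℤ) + y i) (fun i => (x i : ℤ))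
      (fun i => (y i : ℤ)) N hw hDZ hwN heq'
    by_contra hne
    push_neg at hne
    obtain ⟨j, hjspec, hjmin⟩ : ∃ j, x j ≠ y j ∧ ∀ i, i < j → x i = y i :=
      ⟨Nat.find hne, Nat.find_spec hne, fun i hi => not_not.mp (Nat.find_min hne hi)⟩
    have hpresum : ∑ i ∈ range j, x i = ∑ i ∈ range j, y i :=
      sum_congr rfl fun i hi => hjmin i (mem_range.mp hi)
    have hxj : x j < y j := by
      have h1 := hD (j + 1)
      rw [sum_range_succ, sum_range_succ] at h1
      omega
    have Q : ∀ m, x (j + m) < y (j + m) ∧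
        ∑ i ∈ range (j + m + 1), x i < ∑ i ∈ range (j + m + 1), y i := by
      intro m
      induction m with
      | zero =>
        refine ⟨hxj, ?_⟩
        rw [sum_range_succ, sum_range_succ]
        omega
      | succ n ih =>
        obtain ⟨ih1, ih2⟩ := ih
        by_cases hdrop : ((x (j + n + 1) : ℤ) + y (j + n + 1)) < (x (j + n) : ℤ) + y (j + n)
        · exfalso
          have hkN : j + n < N := by
            by_contra hk
            push_neg at hk
            have := hyN (j + n) hk
            omega
          have hE := habel (j + n) hkN hdrop
          have hE' : ∑ i ∈ range (j + n + 1), x i = ∑ i ∈ range (j + n + 1), y i := by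
            have h1 : ((∑ i ∈ range (j + n + 1), x i : ℕ) : ℤ)
                = ((∑ i ∈ range (j + n + 1), y i : ℕ) : ℤ) := by exact_mod_cast hE
            exact_mod_cast h1
          omega
        · have hconst : x (j + n + 1) = x (j + n) ∧ y (j + n + 1) = y (j + n) := by
            have h1 := hx (j + n); have h2 := hy (j + n)
            have h3 : ((x (j + n + 1) : ℤ) + y (j + n + 1)) = (x (j + n) : ℤ) + y (j + n) :=
              le_antisymm (hw (j + n)) (not_lt.mp hdrop)
            have h4 : x (j + n + 1) + y (j + n + 1) = x (j + n) + y (j + n) := by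
              exact_mod_cast h3
            omega
          constructor
          · show x (j + n + 1) < y (j + n + 1)
            omega
          · show ∑ i ∈ range (j + n + 1 + 1), x i < ∑ i ∈ range (j + n + 1 + 1), y i
            rw [sum_range_succ x (j + n + 1), sum_range_succ y (j + n + 1)]
            omega
    have := (Q N).1
    have h1 := hxN (j + N) (Nat.le_add_left N j)
    have h2 := hyN (j + N) (Nat.le_add_left N j)
    omega

private lemma prod_case (x y : ℕ → ℕ) (N : ℕ)
    (hx : ∀ i, x (i + 1) ≤ x i) (hy : ∀ i, y (i + 1) ≤ y i)
    (hxN : ∀ i, N ≤ i → x i = 0) (hyN : ∀ i, N ≤ i → y i = 0)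
    (h00 : x 0 = y 0)
    (hD : ∀ j, ∑ i ∈ range j, x (i + 1) ≤ ∑ i ∈ range j, y (i + 1)) :
    (∑ i ∈ range N, (x i : ℤ) * x (i + 1) ≤ ∑ i ∈ range N, (y i : ℤ) * y (i + 1)) ∧
      ((∑ i ∈ range N, (x i : ℤ) * x (i + 1) = ∑ i ∈ range N, (y i : ℤ) * y (i + 1)) →
        ∀ i, x i = y i) := by
  have hw : ∀ i, ((y (i + 1 + 2) : ℤ) + x (i + 1)) ≤ (y (i + 2) : ℤ) + x i := fun i => by
    have h1 := hx i; have h2 := hy (i + 2)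
    have : x (i + 1) ≤ x i := h1
    exact_mod_cast Nat.add_le_add h2 h1
  have hDZ : ∀ j, ∑ i ∈ range j, (x (i + 1) : ℤ) ≤ ∑ i ∈ range j, (y (i + 1) : ℤ) :=
    fun j => by exact_mod_cast hD j
  have hwN : ((y (N + 2) : ℤ) + x N) = 0 := by
    rw [hyN (N + 2) (by omega), hxN N le_rfl]; norm_num
  -- the key identity
  have hshift : ∑ i ∈ range N, (y (i + 1) : ℤ) * ((y i : ℤ) - x i)
      = ∑ i ∈ range N, (y (i + 1 + 1) : ℤ) * ((y (i + 1) : ℤ) - x (i + 1)) := by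
    have h1 := sum_range_succ' (fun i => (y (i + 1) : ℤ) * ((y i : ℤ) - x i)) N
    have h2 := sum_range_succ (fun i => (y (i + 1) : ℤ) * ((y i : ℤ) - x i)) N
    have hg0 : (y (0 + 1) : ℤ) * ((y 0 : ℤ) - x 0) = 0 := by rw [h00]; ring
    have hgN : (y (N + 1) : ℤ) * ((y N : ℤ) - x N) = 0 := by
      rw [hyN N le_rfl, hxN N le_rfl]; ring
    simp only [hg0, hgN, add_zero] at h1 h2
    linarith [h1, h2]
  have hident : ∑ i ∈ range N, ((y i : ℤ) * y (i + 1) - (x i : ℤ) * x (i + 1))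
      = ∑ i ∈ range N, ((y (i + 2) : ℤ) + x i) * ((y (i + 1) : ℤ) - x (i + 1)) := by
    have e1 : ∑ i ∈ range N, ((y i : ℤ) * y (i + 1) - (x i : ℤ) * x (i + 1))
        = ∑ i ∈ range N, ((y (i + 1) : ℤ) * ((y i : ℤ) - x i)
            + (x i : ℤ) * ((y (i + 1) : ℤ) - x (i + 1))) :=
      sum_congr rfl fun i _ => by ring
    have e2 : ∑ i ∈ range N, ((y (i + 1) : ℤ) * ((y i : ℤ) - x i)
          + (x i : ℤ) * ((y (i + 1) : ℤ) - x (i + 1)))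
        = (∑ i ∈ range N, (y (i + 1) : ℤ) * ((y i : ℤ) - x i))
          + ∑ i ∈ range N, (x i : ℤ) * ((y (i + 1) : ℤ) - x (i + 1)) := sum_add_distrib
    have e3 : ∑ i ∈ range N, ((y (i + 2) : ℤ) + x i) * ((y (i + 1) : ℤ) - x (i + 1))
        = (∑ i ∈ range N, (y (i + 1 + 1) : ℤ) * ((y (i + 1) : ℤ) - x (i + 1)))
          + ∑ i ∈ range N, (x i : ℤ) * ((y (i + 1) : ℤ) - x (i + 1)) := by
      rw [← sum_add_distrib]
      exact sum_congr rfl fun i _ => by ring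
    rw [e1, e2, e3, hshift]
  have hsub : ∑ i ∈ range N, ((y i : ℤ) * y (i + 1) - (x i : ℤ) * x (i + 1))
      = (∑ i ∈ range N, (y i : ℤ) * y (i + 1)) - ∑ i ∈ range N, (x i : ℤ) * x (i + 1) :=
    sum_sub_distrib _ _
  have hwsub : ∑ i ∈ range N, ((y (i + 2) : ℤ) + x i) * ((y (i + 1) : ℤ) - x (i + 1))
      = (∑ i ∈ range N, ((y (i + 2) : ℤ) + x i) * (y (i + 1) : ℤ))
        - ∑ i ∈ range N, ((y (i + 2) : ℤ) + x i) * (x (i + 1) : ℤ) := by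
    rw [← sum_sub_distrib]
    exact sum_congr rfl fun i _ => by ring
  have hle := abel_le (fun i => (y (i + 2) : ℤ) + x i) (fun i => (x (i + 1) : ℤ))
    (fun i => (y (i + 1) : ℤ)) N hw hDZ hwN
  constructor
  · have := hident
    rw [hsub, hwsub] at this
    linarith
  · intro heq
    have heq' : ∑ i ∈ range N, ((y (i + 2) : ℤ) + x i) * (x (i + 1) : ℤ)
        = ∑ i ∈ range N, ((y (i + 2) : ℤ) + x i) * (y (i + 1) : ℤ) := by
      have := hident
      rw [hsub, hwsub] at this
      linarith
    have habel := abel_eq (fun i => (y (i + 2) : ℤ) + x i) (fun i => (x (i + 1) : ℤ))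
      (fun i => (y (i + 1) : ℤ)) N hw hDZ hwN heq'
    by_contra hne
    push_neg at hne
    obtain ⟨j, hjspec, hjmin⟩ : ∃ j, x j ≠ y j ∧ ∀ i, i < j → x i = y i :=
      ⟨Nat.find hne, Nat.find_spec hne, fun i hi => not_not.mp (Nat.find_min hne hi)⟩
    have hj0 : j ≠ 0 := fun h => hjspec (h ▸ h00)
    obtain ⟨j', rfl⟩ : ∃ j', j = j' + 1 := ⟨j - 1, by omega⟩
    have hpresum : ∑ i ∈ range j', x (i + 1) = ∑ i ∈ range j', y (i + 1) :=
      sum_congr rfl fun i hi => hjmin (i + 1) (by have := mem_range.mp hi; omega)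
    have hxj : x (j' + 1) < y (j' + 1) := by
      have h1 := hD (j' + 1)
      rw [sum_range_succ (fun i => x (i + 1)) j', sum_range_succ (fun i => y (i + 1)) j'] at h1
      have hne' : x (j' + 1) ≠ y (j' + 1) := hjspec
      omega
    have hj'eq : x j' = y j' := hjmin j' (by omega)
    have hyj' : 1 ≤ x j' := by
      have := hy j'
      omega
    by_cases hdrop : ((y (j' + 1 + 2) : ℤ) + x (j' + 1)) < (y (j' + 2) : ℤ) + x j'
    · have hj'N : j' < N := by
        by_contra hk
        push_neg at hk
        have := hxN j' hk
        omega
      have hE := habel j' hj'N hdrop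
      have hE' : ∑ i ∈ range (j' + 1), x (i + 1) = ∑ i ∈ range (j' + 1), y (i + 1) := by
        exact_mod_cast hE
      rw [sum_range_succ (fun i => x (i + 1)) j', sum_range_succ (fun i => y (i + 1)) j'] at hE'
      omega
    · have h3 : ((y (j' + 1 + 2) : ℤ) + x (j' + 1)) = (y (j' + 2) : ℤ) + x j' :=
        le_antisymm (hw j') (not_lt.mp hdrop)
      have h4 : y (j' + 3) + x (j' + 1) = y (j' + 2) + x j' := by exact_mod_cast h3
      have h5 : y (j' + 3) ≤ y (j' + 2) := hy (j' + 2)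
      have h6 : x (j' + 1) ≤ x j' := hx j'
      have h7 : y (j' + 1) ≤ y j' := hy j'
      omega

private lemma icc_sum_eq (f : ℕ → ℕ) (j : ℕ) :
    ∑ i ∈ Icc 1 j, f i = ∑ i ∈ range j, f (i + 1) := by
  rw [← Finset.Ico_add_one_right_eq_Icc, Finset.sum_Ico_eq_sum_range]
  have : j + 1 - 1 = j := by omega
  rw [this]
  exact sum_congr rfl fun i _ => by rw [Nat.add_comm]
/-- Theorem 3.1 of the paper in the combinatorial case h = 0: under the
majorizations (M1)–(M3) between the Weyr characteristics of two pencils of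
equal rank, the (normalized) codimension of the orbit of L is at most that of
M, with equality iff all the eigenstructure data coincide. -/
theorem stmt_19 (rL rM lL lM : ℕ → ℕ)
    (Λ : Type*) [Fintype Λ] (WL WM : Λ → ℕ → ℕ)
    (hrLmono : ∀ i, rL (i + 1) ≤ rL i) (hrMmono : ∀ i, rM (i + 1) ≤ rM i)
    (hlLmono : ∀ i, lL (i + 1) ≤ lL i) (hlMmono : ∀ i, lM (i + 1) ≤ lM i)
    (hWLmono : ∀ a, ∀ i, 1 ≤ i → WL a (i + 1) ≤ WL a i)
    (hWMmono : ∀ a, ∀ i, 1 ≤ i → WM a (i + 1) ≤ WM a i)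
    (hrL0 : ∃ N, ∀ i, N ≤ i → rL i = 0) (hrM0 : ∃ N, ∀ i, N ≤ i → rM i = 0)
    (hlL0 : ∃ N, ∀ i, N ≤ i → lL i = 0) (hlM0 : ∃ N, ∀ i, N ≤ i → lM i = 0)
    (hWL0 : ∀ a, ∃ N, ∀ i, N ≤ i → WL a i = 0)
    (hWM0 : ∀ a, ∃ N, ∀ i, N ≤ i → WM a i = 0)
    (hr00 : rL 0 = rM 0) (hl00 : lL 0 = lM 0)
    (hM1 : ∀ j, 1 ≤ j →
      ∑ i ∈ Finset.Icc 1 j, rM i ≤ ∑ i ∈ Finset.Icc 1 j, rL i)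
    (hM2 : ∀ j, 1 ≤ j →
      ∑ i ∈ Finset.Icc 1 j, lM i ≤ ∑ i ∈ Finset.Icc 1 j, lL i)
    (hM3 : ∀ a : Λ, ∀ j, 1 ≤ j →
      ∑ i ∈ Finset.Icc 1 j, WL a i ≤ ∑ i ∈ Finset.Icc 1 j, WM a i) :
    (-(∑ᶠ i : ℕ, ((rL i : ℤ) * rL (i + 1))) -
        (∑ᶠ i : ℕ, ((lL i : ℤ) * lL (i + 1))) +
        ∑ᶠ a : Λ, ∑ᶠ i : ℕ, (WL a (i + 1) : ℤ) ^ 2 ≤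
      -(∑ᶠ i : ℕ, ((rM i : ℤ) * rM (i + 1))) -
        (∑ᶠ i : ℕ, ((lM i : ℤ) * lM (i + 1))) +
        ∑ᶠ a : Λ, ∑ᶠ i : ℕ, (WM a (i + 1) : ℤ) ^ 2) ∧
    ((-(∑ᶠ i : ℕ, ((rL i : ℤ) * rL (i + 1))) -
        (∑ᶠ i : ℕ, ((lL i : ℤ) * lL (i + 1))) +
        ∑ᶠ a : Λ, ∑ᶠ i : ℕ, (WL a (i + 1) : ℤ) ^ 2 =
      -(∑ᶠ i : ℕ, ((rM i : ℤ) * rM (i + 1))) -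
        (∑ᶠ i : ℕ, ((lM i : ℤ) * lM (i + 1))) +
        ∑ᶠ a : Λ, ∑ᶠ i : ℕ, (WM a (i + 1) : ℤ) ^ 2) ↔
      (∀ i, rL i = rM i) ∧ (∀ i, lL i = lM i) ∧
        ∀ a : Λ, ∀ i, 1 ≤ i → WL a i = WM a i) := by
  classical
  obtain ⟨N1, hN1⟩ := hrL0
  obtain ⟨N2, hN2⟩ := hrM0
  obtain ⟨N3, hN3⟩ := hlL0
  obtain ⟨N4, hN4⟩ := hlM0
  choose NW hNW using hWL0
  choose NW' hNW' using hWM0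
  set N := N1 + N2 + N3 + N4 + ∑ a : Λ, (NW a + NW' a) with hNdef
  have hWbound : ∀ a : Λ, NW a + NW' a ≤ N := fun a => by
    have h : NW a + NW' a ≤ ∑ a : Λ, (NW a + NW' a) :=
      Finset.single_le_sum (f := fun a => NW a + NW' a) (fun _ _ => Nat.zero_le _) (mem_univ a)
    omega
  have hrLN : ∀ i, N ≤ i → rL i = 0 := fun i hi => hN1 i (by omega)
  have hrMN : ∀ i, N ≤ i → rM i = 0 := fun i hi => hN2 i (by omega)
  have hlLN : ∀ i, N ≤ i → lL i = 0 := fun i hi => hN3 i (by omega)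
  have hlMN : ∀ i, N ≤ i → lM i = 0 := fun i hi => hN4 i (by omega)
  have hWLN : ∀ a, ∀ i, N ≤ i → WL a i = 0 := fun a i hi =>
    hNW a i (by have := hWbound a; omega)
  have hWMN : ∀ a, ∀ i, N ≤ i → WM a i = 0 := fun a i hi =>
    hNW' a i (by have := hWbound a; omega)
  -- convert finsums to finite sums
  have econv : ∀ (f : ℕ → ℕ), (∀ i, N ≤ i → f i = 0) →
      ∑ᶠ i : ℕ, ((f i : ℤ) * f (i + 1)) = ∑ i ∈ range N, ((f i : ℤ) * f (i + 1)) := by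
    intro f hf
    apply finsum_eq_sum_of_support_subset
    intro i hi
    simp only [Function.mem_support] at hi
    simp only [coe_range, Set.mem_Iio]
    by_contra hNi
    push_neg at hNi
    exact hi (by rw [hf i hNi]; simp)
  have eWconv : ∀ (W : Λ → ℕ → ℕ), (∀ a i, N ≤ i → W a i = 0) →
      (∑ᶠ a : Λ, ∑ᶠ i : ℕ, (W a (i + 1) : ℤ) ^ 2)
        = ∑ a : Λ, ∑ i ∈ range N, (W a (i + 1) : ℤ) ^ 2 := by
    intro W hW
    rw [finsum_eq_sum_of_fintype]
    refine sum_congr rfl fun a _ => ?_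
    apply finsum_eq_sum_of_support_subset
    intro i hi
    simp only [Function.mem_support] at hi
    simp only [coe_range, Set.mem_Iio]
    by_contra hNi
    push_neg at hNi
    exact hi (by rw [hW a (i + 1) (by omega)]; simp)
  rw [econv rL hrLN, econv rM hrMN, econv lL hlLN, econv lM hlMN,
    eWconv WL hWLN, eWconv WM hWMN]
  -- apply the three case lemmas
  have hr := prod_case rM rL N hrMmono hrLmono hrMN hrLN hr00.symm (fun j => by
    cases j with
    | zero => simp
    | succ n =>
      have h := hM1 (n + 1) (by omega)
      rw [icc_sum_eq, icc_sum_eq] at h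
      exact h)
  have hl := prod_case lM lL N hlMmono hlLmono hlMN hlLN hl00.symm (fun j => by
    cases j with
    | zero => simp
    | succ n =>
      have h := hM2 (n + 1) (by omega)
      rw [icc_sum_eq, icc_sum_eq] at h
      exact h)
  have hWc : ∀ a : Λ,
      (∑ i ∈ range N, (WL a (i + 1) : ℤ) ^ 2 ≤ ∑ i ∈ range N, (WM a (i + 1) : ℤ) ^ 2) ∧
      ((∑ i ∈ range N, (WL a (i + 1) : ℤ) ^ 2 = ∑ i ∈ range N, (WM a (i + 1) : ℤ) ^ 2) →
        ∀ i, WL a (i + 1) = WM a (i + 1)) := fun a =>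
    sq_case (fun i => WL a (i + 1)) (fun i => WM a (i + 1)) N
      (fun i => hWLmono a (i + 1) (by omega)) (fun i => hWMmono a (i + 1) (by omega))
      (fun i hi => hWLN a (i + 1) (by omega)) (fun i hi => hWMN a (i + 1) (by omega))
      (fun j => by
        cases j with
        | zero => simp
        | succ n =>
          have h := hM3 a (n + 1) (by omega)
          rw [icc_sum_eq, icc_sum_eq] at h
          exact h)
  have hWle : ∑ a : Λ, ∑ i ∈ range N, (WL a (i + 1) : ℤ) ^ 2
      ≤ ∑ a : Λ, ∑ i ∈ range N, (WM a (i + 1) : ℤ) ^ 2 :=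
    sum_le_sum fun a _ => (hWc a).1
  constructor
  · have h1 := hr.1
    have h2 := hl.1
    linarith
  · constructor
    · intro heq
      have h1 := hr.1
      have h2 := hl.1
      have hAr : ∑ i ∈ range N, ((rM i : ℤ) * rM (i + 1))
          = ∑ i ∈ range N, ((rL i : ℤ) * rL (i + 1)) := by linarith
      have hBr : ∑ i ∈ range N, ((lM i : ℤ) * lM (i + 1))
          = ∑ i ∈ range N, ((lL i : ℤ) * lL (i + 1)) := by linarith
      have hWEq : ∑ a : Λ, ∑ i ∈ range N, (WL a (i + 1) : ℤ) ^ 2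
          = ∑ a : Λ, ∑ i ∈ range N, (WM a (i + 1) : ℤ) ^ 2 := by linarith
      have hWEach := (sum_eq_sum_iff_of_le (fun a _ => (hWc a).1)).mp hWEq
      refine ⟨fun i => (hr.2 hAr i).symm, fun i => (hl.2 hBr i).symm, ?_⟩
      intro a i hi
      obtain ⟨k, rfl⟩ : ∃ k, i = k + 1 := ⟨i - 1, by omega⟩
      exact (hWc a).2 (hWEach a (mem_univ a)) k
    · rintro ⟨h1, h2, h3⟩
      have er : ∑ i ∈ range N, ((rL i : ℤ) * rL (i + 1))
          = ∑ i ∈ range N, ((rM i : ℤ) * rM (i + 1)) :=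
        sum_congr rfl fun i _ => by rw [h1, h1]
      have el : ∑ i ∈ range N, ((lL i : ℤ) * lL (i + 1))
          = ∑ i ∈ range N, ((lM i : ℤ) * lM (i + 1)) :=
        sum_congr rfl fun i _ => by rw [h2, h2]
      have eW : ∑ a : Λ, ∑ i ∈ range N, (WL a (i + 1) : ℤ) ^ 2
          = ∑ a : Λ, ∑ i ∈ range N, (WM a (i + 1) : ℤ) ^ 2 :=
        sum_congr rfl fun a _ => sum_congr rfl fun i _ => by
          rw [h3 a (i + 1) (by omega)]
      rw [er, el, eW]
end
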